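/- arXiv:1805.04796 — 2 statements merged into one kernel-verified Lean document; each statement's English description precedes it below -/
import Mathlib

section
/- The Borsuk–Ulam theorem implies Brouwer's fixed-point theorem: assuming that every continuous map S^n → ℝ^n identifies some pair of antipodal points, every continuous map from the closed unit ball B^n to itself has a fixed point. -/
open Metric

noncomputable section BorsukBrouwerAux

/-- Projection of `ℝ^{n+1}` onto the first `n` coordinates. -/
def bbProj (n : ℕ) (x : EuclideanSpace ℝ (Fin (n + 1))) : EuclideanSpace ℝ (Fin n) :=
  WithLp.toLp 2 (fun i : Fin n => x i.castSucc)

lemma bbProj_continuous (n : ℕ) : Continuous (bbProj n) := by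
  have h : bbProj n = (WithLp.equiv 2 (∀ _ : Fin n, ℝ)).symm ∘
      (fun (y : ∀ _ : Fin (n+1), ℝ) (i : Fin n) => y i.castSucc) ∘
      (WithLp.equiv 2 (∀ _ : Fin (n + 1), ℝ)) := rfl
  rw [h]
  exact (PiLp.continuous_toLp _ _).comp
    ((continuous_pi fun i => continuous_apply _).comp (PiLp.continuous_ofLp _ _))

lemma bbProj_neg (n : ℕ) (x : EuclideanSpace ℝ (Fin (n + 1))) :
    bbProj n (-x) = -bbProj n x := by
  ext i
  simp [bbProj]

/-- The odd map `S^n ∋ (y,t) ↦ (max |t| ‖y‖)⁻¹ • y ∈ B^n`. -/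
def bbC (n : ℕ) (x : EuclideanSpace ℝ (Fin (n + 1))) : EuclideanSpace ℝ (Fin n) :=
  (max |x (Fin.last n)| ‖bbProj n x‖)⁻¹ • bbProj n x

lemma bbC_norm_le (n : ℕ) (x : EuclideanSpace ℝ (Fin (n + 1))) : ‖bbC n x‖ ≤ 1 := by
  set m : ℝ := max |x (Fin.last n)| ‖bbProj n x‖ with hm
  have hy : ‖bbProj n x‖ ≤ m := le_max_right _ _
  have hm0 : 0 ≤ m := (norm_nonneg _).trans hy
  rcases hm0.eq_or_lt with h | h
  · have hy0 : ‖bbProj n x‖ = 0 := le_antisymm (h ▸ hy) (norm_nonneg _)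
    rw [bbC, ← hm, norm_smul, hy0, mul_zero]
    norm_num
  · rw [bbC, ← hm, norm_smul, norm_inv, Real.norm_eq_abs, abs_of_pos h]
    calc m⁻¹ * ‖bbProj n x‖ ≤ m⁻¹ * m := by gcongr
      _ = 1 := inv_mul_cancel₀ h.ne'
  
lemma bbC_mem (n : ℕ) (x : EuclideanSpace ℝ (Fin (n + 1))) :
    bbC n x ∈ closedBall (0 : EuclideanSpace ℝ (Fin n)) 1 :=
  mem_closedBall_zero_iff.mpr (bbC_norm_le n x)

lemma bbC_neg_mem (n : ℕ) (x : EuclideanSpace ℝ (Fin (n + 1))) :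
    -bbC n x ∈ closedBall (0 : EuclideanSpace ℝ (Fin n)) 1 :=
  mem_closedBall_zero_iff.mpr (by rw [norm_neg]; exact bbC_norm_le n x)

lemma bbC_neg (n : ℕ) (x : EuclideanSpace ℝ (Fin (n + 1))) : bbC n (-x) = -bbC n x := by
  rw [bbC, bbC, bbProj_neg]
  simp

lemma bbM_pos (n : ℕ) (x : EuclideanSpace ℝ (Fin (n + 1))) (hx : ‖x‖ = 1) :
    0 < max |x (Fin.last n)| ‖bbProj n x‖ := by
  by_contra h
  push_neg at h
  have ht : |x (Fin.last n)| ≤ 0 := (le_max_left _ _).trans h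
  have hy : ‖bbProj n x‖ ≤ 0 := (le_max_right _ _).trans h
  have ht0 : x (Fin.last n) = 0 := abs_nonpos_iff.mp ht
  have hy0 : bbProj n x = 0 := norm_le_zero_iff.mp hy
  have hx0 : x = 0 := by
    ext i
    refine Fin.lastCases ?_ (fun j => ?_) i
    · exact ht0
    · exact congrArg (fun z : EuclideanSpace ℝ (Fin n) => z j) hy0
  rw [hx0, norm_zero] at hx
  norm_num at hx

/-- The Su map used in the Borsuk–Ulam ⇒ Brouwer argument. -/
def bbF (n : ℕ)
    (g : closedBall (0 : EuclideanSpace ℝ (Fin n)) 1 →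
         closedBall (0 : EuclideanSpace ℝ (Fin n)) 1)
    (x : EuclideanSpace ℝ (Fin (n + 1))) : EuclideanSpace ℝ (Fin n) :=
  bbProj n x - (max (x (Fin.last n)) 0) • ((g ⟨bbC n x, bbC_mem n x⟩ :
      closedBall (0 : EuclideanSpace ℝ (Fin n)) 1) : EuclideanSpace ℝ (Fin n))
    + (max (-(x (Fin.last n))) 0) • ((g ⟨-bbC n x, bbC_neg_mem n x⟩ :
      closedBall (0 : EuclideanSpace ℝ (Fin n)) 1) : EuclideanSpace ℝ (Fin n))

end BorsukBrouwerAux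

/-- The Borsuk–Ulam theorem implies Brouwer's fixed-point theorem: if every
continuous map `S^n → ℝ^n` identifies some pair of antipodal points, then every
continuous map from the closed unit ball `B^n` to itself has a fixed point. -/
theorem borsuk_ulam_implies_brouwer (n : ℕ)
    (BU : ∀ f : Metric.sphere (0 : EuclideanSpace ℝ (Fin (n + 1))) 1 →
            EuclideanSpace ℝ (Fin n), Continuous f →
            ∃ x : Metric.sphere (0 : EuclideanSpace ℝ (Fin (n + 1))) 1, f (-x) = f x) :
    ∀ g : Metric.closedBall (0 : EuclideanSpace ℝ (Fin n)) 1 →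
          Metric.closedBall (0 : EuclideanSpace ℝ (Fin n)) 1, Continuous g →
      ∃ x : Metric.closedBall (0 : EuclideanSpace ℝ (Fin n)) 1, g x = x := by
  intro g hg
  -- restrict the Su map to the sphere
  set S := Metric.sphere (0 : EuclideanSpace ℝ (Fin (n + 1))) 1 with hS
  have hnorm : ∀ x : S, ‖(x : EuclideanSpace ℝ (Fin (n + 1)))‖ = 1 := fun x =>
    mem_sphere_zero_iff_norm.mp x.2
  have hv : Continuous fun x : S => (x : EuclideanSpace ℝ (Fin (n + 1))) :=
    continuous_subtype_val
  have ht : Continuous fun x : S => (x : EuclideanSpace ℝ (Fin (n + 1))) (Fin.last n) :=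
    (EuclideanSpace.proj (Fin.last n)).continuous.comp hv
  have hy : Continuous fun x : S => bbProj n (x : EuclideanSpace ℝ (Fin (n + 1))) :=
    (bbProj_continuous n).comp hv
  have hminv : Continuous fun x : S =>
      (max |(x : EuclideanSpace ℝ (Fin (n + 1))) (Fin.last n)|
        ‖bbProj n (x : EuclideanSpace ℝ (Fin (n + 1)))‖)⁻¹ := by
    refine Continuous.inv₀ (Continuous.max ht.abs hy.norm) ?_
    intro x
    exact (bbM_pos n _ (hnorm x)).ne'
  have hc : Continuous fun x : S => bbC n (x : EuclideanSpace ℝ (Fin (n + 1))) :=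
    hminv.smul hy
  have hgc : Continuous fun x : S =>
      ((g ⟨bbC n (x : EuclideanSpace ℝ (Fin (n + 1))), bbC_mem n _⟩ :
        Metric.closedBall (0 : EuclideanSpace ℝ (Fin n)) 1) : EuclideanSpace ℝ (Fin n)) :=
    continuous_subtype_val.comp (hg.comp (hc.subtype_mk _))
  have hgc' : Continuous fun x : S =>
      ((g ⟨-bbC n (x : EuclideanSpace ℝ (Fin (n + 1))), bbC_neg_mem n _⟩ :
        Metric.closedBall (0 : EuclideanSpace ℝ (Fin n)) 1) : EuclideanSpace ℝ (Fin n)) :=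
    continuous_subtype_val.comp (hg.comp ((hc.neg).subtype_mk _))
  have hf : Continuous fun x : S => bbF n g (x : EuclideanSpace ℝ (Fin (n + 1))) := by
    unfold bbF
    exact (hy.sub ((ht.max continuous_const).smul hgc)).add
      ((ht.neg.max continuous_const).smul hgc')
  obtain ⟨x, hx⟩ := BU (fun x : S => bbF n g (x : EuclideanSpace ℝ (Fin (n + 1)))) hf
  set v : EuclideanSpace ℝ (Fin (n + 1)) := (x : EuclideanSpace ℝ (Fin (n + 1))) with hvdef
  have hxneg : ((-x : S) : EuclideanSpace ℝ (Fin (n + 1))) = -v := coe_neg_sphere x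
  set t : ℝ := v (Fin.last n) with htdef
  set y : EuclideanSpace ℝ (Fin n) := bbProj n v with hydef
  set A : EuclideanSpace ℝ (Fin n) :=
    ((g ⟨bbC n v, bbC_mem n v⟩ : Metric.closedBall (0 : EuclideanSpace ℝ (Fin n)) 1) :
      EuclideanSpace ℝ (Fin n)) with hAdef
  set B : EuclideanSpace ℝ (Fin n) :=
    ((g ⟨-bbC n v, bbC_neg_mem n v⟩ : Metric.closedBall (0 : EuclideanSpace ℝ (Fin n)) 1) :
      EuclideanSpace ℝ (Fin n)) with hBdef
  have hAle : ‖A‖ ≤ 1 := mem_closedBall_zero_iff.mp (g _).2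
  have hBle : ‖B‖ ≤ 1 := mem_closedBall_zero_iff.mp (g _).2
  -- rewrite the Borsuk–Ulam equation
  have e1 : (⟨bbC n (-v), bbC_mem n (-v)⟩ :
      Metric.closedBall (0 : EuclideanSpace ℝ (Fin n)) 1) = ⟨-bbC n v, bbC_neg_mem n v⟩ :=
    Subtype.ext (bbC_neg n v)
  have e2 : (⟨-bbC n (-v), bbC_neg_mem n (-v)⟩ :
      Metric.closedBall (0 : EuclideanSpace ℝ (Fin n)) 1) = ⟨bbC n v, bbC_mem n v⟩ :=
    Subtype.ext (by show -bbC n (-v) = bbC n v; rw [bbC_neg, neg_neg])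
  have hnegt : (-v) (Fin.last n) = -t := rfl
  have hx' : -y - max (-t) 0 • B + max t 0 • A = y - max t 0 • A + max (-t) 0 • B := by
    have := hx
    simp only [bbF, hxneg, e1, e2, bbProj_neg, hnegt, neg_neg, ← htdef, ← hydef,
      ← hAdef, ← hBdef] at this
    exact this
  -- deduce `y = max t 0 • A - max (-t) 0 • B`
  have key : y = max t 0 • A - max (-t) 0 • B := by
    have h0 := congrArg
      (fun z : EuclideanSpace ℝ (Fin n) => z + (y + max (-t) 0 • B - max t 0 • A)) hx'
    have h1 : (0 : EuclideanSpace ℝ (Fin n)) =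
        (2 : ℝ) • (y + max (-t) 0 • B - max t 0 • A) := by
      rw [two_smul]
      calc (0 : EuclideanSpace ℝ (Fin n))
          = -y - max (-t) 0 • B + max t 0 • A
              + (y + max (-t) 0 • B - max t 0 • A) := by abel
        _ = y - max t 0 • A + max (-t) 0 • B
              + (y + max (-t) 0 • B - max t 0 • A) := h0
        _ = (y + max (-t) 0 • B - max t 0 • A)
              + (y + max (-t) 0 • B - max t 0 • A) := by abel
    have h2 : y + max (-t) 0 • B - max t 0 • A = 0 :=
      (smul_eq_zero.mp h1.symm).resolve_left (by norm_num)
    have h3 : y + max (-t) 0 • B = max t 0 • A := sub_eq_zero.mp h2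
    rw [eq_sub_iff_add_eq]
    exact h3
  rcases lt_trichotomy t 0 with htneg | htzero | htpos
  · -- `t < 0`: fixed point at `-bbC n v`
    rw [max_eq_right htneg.le, max_eq_left (neg_nonneg.mpr htneg.le), zero_smul,
      zero_sub, neg_smul, neg_neg] at key
    -- key : y = t • B
    have hyle : ‖y‖ ≤ -t := by
      rw [key, norm_smul, Real.norm_eq_abs, abs_of_neg htneg]
      nlinarith [norm_nonneg B]
    have hmeq : max |t| ‖y‖ = -t := by
      rw [abs_of_neg htneg]
      exact max_eq_left hyle
    have hB : -bbC n v = B := by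
      have hcval : bbC n v = (-t)⁻¹ • y := by rw [bbC, ← htdef, ← hydef, hmeq]
      rw [hcval, key, smul_smul]
      rw [show (-t)⁻¹ * t = -1 by rw [inv_neg, neg_mul, inv_mul_cancel₀ htneg.ne]]
      simp
    refine ⟨⟨-bbC n v, bbC_neg_mem n v⟩, Subtype.ext ?_⟩
    show B = -bbC n v
    exact hB.symm
  · -- `t = 0`: impossible on the sphere
    exfalso
    rw [htzero] at key
    simp only [max_self, neg_zero, zero_smul, sub_zero] at key
    -- key : y = 0
    have := bbM_pos n v (hnorm x)
    rw [← htdef, ← hydef, htzero, key] at this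
    simp at this
  · -- `0 < t`: fixed point at `bbC n v`
    rw [max_eq_left htpos.le, max_eq_right (neg_nonpos.mpr htpos.le), zero_smul,
      sub_zero] at key
    -- key : y = t • A
    have hyle : ‖y‖ ≤ t := by
      rw [key, norm_smul, Real.norm_eq_abs, abs_of_pos htpos]
      nlinarith [norm_nonneg A]
    have hmeq : max |t| ‖y‖ = t := by
      rw [abs_of_pos htpos]
      exact max_eq_left hyle
    have hA : bbC n v = A := by
      have hcval : bbC n v = t⁻¹ • y := by rw [bbC, ← htdef, ← hydef, hmeq]
      rw [hcval, key, smul_smul, inv_mul_cancel₀ htpos.ne', one_smul]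
    refine ⟨⟨bbC n v, bbC_mem n v⟩, Subtype.ext ?_⟩
    show A = bbC n v
    exact hA.symm
end

section
/- The 2-rank of the special orthogonal group SO(n) equals n − 1. -/
/-- The 2-rank of a group `G`: the largest `h` such that `G` contains a
subgroup isomorphic to the elementary abelian 2-group `(ℤ/2)^h`. -/
noncomputable def twoRank (G : Type*) [Group G] : ℕ :=
  sSup {h : ℕ | ∃ H : Subgroup G, Nonempty (H ≃* (Fin h → Multiplicative (ZMod 2)))}

/-- The special orthogonal group `SO(n)`: the subgroup of the orthogonal group
consisting of matrices of determinant one. -/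
def SO (n : ℕ) : Subgroup (Matrix.orthogonalGroup (Fin n) ℝ) where
  carrier := {A | (A : Matrix (Fin n) (Fin n) ℝ).det = 1}
  one_mem' := by simp
  mul_mem' := by
    intro a b ha hb
    simp only [Set.mem_setOf_eq, Matrix.UnitaryGroup.mul_val, Matrix.det_mul] at *
    rw [ha, hb, mul_one]
  inv_mem' := by
    intro a ha
    simp only [Set.mem_setOf_eq, Matrix.UnitaryGroup.inv_val, Matrix.star_eq_conjTranspose,
      Matrix.det_conjTranspose] at *
    simpa using ha
  
open Matrix Finset


namespace TwoRankSO

noncomputable def sgn (x : ZMod 2) : ℝ := if x = 0 then 1 else -1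

lemma zmod2_cases (a : ZMod 2) : a = 0 ∨ a = 1 := by revert a; decide

lemma sgn_zero : sgn 0 = 1 := by simp [sgn]

lemma sgn_add (a b : ZMod 2) : sgn (a + b) = sgn a * sgn b := by
  rcases zmod2_cases a with ha | ha <;> rcases zmod2_cases b with hb | hb <;>
    subst ha <;> subst hb <;> simp [sgn] <;> decide

lemma sgn_mul_self (a : ZMod 2) : sgn a * sgn a = 1 := by
  rcases zmod2_cases a with ha | ha <;> subst ha <;> norm_num [sgn]

lemma sgn_eq_one_iff (a : ZMod 2) : sgn a = 1 ↔ a = 0 := by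
  rcases zmod2_cases a with ha | ha <;> subst ha <;> norm_num [sgn]

lemma sgn_one : sgn 1 = -1 := by norm_num [sgn]

variable {h : ℕ}

/-- pairing -/
def ip (v w : Fin h → ZMod 2) : ZMod 2 := ∑ i, v i * w i

lemma ip_comm (v w : Fin h → ZMod 2) : ip v w = ip w v := by
  unfold ip; exact Finset.sum_congr rfl fun i _ => mul_comm _ _

lemma ip_add_left (u v w : Fin h → ZMod 2) : ip (u + v) w = ip u w + ip v w := by
  unfold ip; rw [← Finset.sum_add_distrib]
  exact Finset.sum_congr rfl fun i _ => by simp [add_mul]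

lemma ip_zero_left (w : Fin h → ZMod 2) : ip 0 w = 0 := by simp [ip]

lemma sum_sgn_ip (w : Fin h → ZMod 2) :
    ∑ v : Fin h → ZMod 2, sgn (ip v w) = if w = 0 then (2 ^ h : ℝ) else 0 := by
  split_ifs with hw
  · subst hw
    have : ∀ v : Fin h → ZMod 2, sgn (ip v 0) = 1 := by
      intro v; rw [ip_comm, ip_zero_left, sgn_zero]
    rw [Finset.sum_congr rfl fun v _ => this v]
    simp [Finset.card_univ]
  · obtain ⟨i, hi⟩ : ∃ i, w i ≠ 0 := by
      by_contra hc; push_neg at hc; exact hw (funext hc)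
    have hwi : w i = 1 := (zmod2_cases (w i)).resolve_left hi
    set δ : Fin h → ZMod 2 := Pi.single i 1 with hδ
    have hipδ : ip δ w = 1 := by
      unfold ip
      rw [Finset.sum_eq_single i]
      · simp [hδ, hwi]
      · intro b _ hb; simp [hδ, Pi.single_eq_of_ne hb]
      · simp
    have key : ∀ v : Fin h → ZMod 2, sgn (ip (δ + v) w) = - sgn (ip v w) := by
      intro v
      rw [ip_add_left, sgn_add, hipδ, sgn_one]; ring
    have heq : ∑ v : Fin h → ZMod 2, sgn (ip v w)
        = ∑ v : Fin h → ZMod 2, - sgn (ip v w) := by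
      rw [← Equiv.sum_comp (Equiv.addLeft δ) (fun v => sgn (ip v w))]
      exact Finset.sum_congr rfl fun v _ => key v
    rw [Finset.sum_neg_distrib] at heq
    linarith


lemma pi_add_self (v : Fin h → ZMod 2) : v + v = 0 := by
  funext i; simp [CharTwo.add_self_eq_zero]


lemma conjT_eq_T {n : ℕ} (A : Matrix (Fin n) (Fin n) ℝ) : Aᴴ = Aᵀ := by
  ext i j; simp [Matrix.conjTranspose_apply, Matrix.transpose_apply]

lemma involution_trace_ne (n : ℕ) (g : Matrix (Fin n) (Fin n) ℝ) (hsym : gᵀ = g)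
    (hinv : g * g = 1) (hdet : g.det = 1) : g.trace ≠ (n : ℝ) - 2 := by
  intro htr
  have hherm : g.IsHermitian := by rw [Matrix.IsHermitian, conjT_eq_T, hsym]
  set μ := hherm.eigenvalues with hμ
  -- eigenvalues are ±1
  have heig : ∀ i, μ i = 1 ∨ μ i = -1 := by
    intro i
    have hb := hherm.mulVec_eigenvectorBasis i
    have hb2 : g *ᵥ (g *ᵥ ⇑(hherm.eigenvectorBasis i)) = (μ i * μ i) • ⇑(hherm.eigenvectorBasis i) := by
      rw [hb, Matrix.mulVec_smul, hb, smul_smul]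
    rw [Matrix.mulVec_mulVec, hinv, Matrix.one_mulVec] at hb2
    have hbne : ⇑(hherm.eigenvectorBasis i) ≠ 0 := by
      have := hherm.eigenvectorBasis.orthonormal.ne_zero i
      intro hc
      apply this
      ext j
      exact congrFun hc j
    have : (μ i * μ i - 1) • ⇑(hherm.eigenvectorBasis i) = 0 := by
      rw [sub_smul, one_smul, ← hb2, sub_self]
    rcases smul_eq_zero.mp this with hz | hz
    · have : μ i * μ i = 1 := by linarith [sub_eq_zero.mp (by linarith [hz] : μ i * μ i - 1 = 0)]
      exact mul_self_eq_one_iff.mp this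
    · exact absurd hz hbne
  -- trace and det in terms of eigenvalues
  have htr' : g.trace = ∑ i, μ i := by
    conv_lhs => rw [hherm.spectral_theorem]
    rw [Unitary.conjStarAlgAut_apply, Matrix.trace_mul_cycle]
    have : (star (hherm.eigenvectorUnitary : Matrix (Fin n) (Fin n) ℝ)) *
        (hherm.eigenvectorUnitary : Matrix (Fin n) (Fin n) ℝ) = 1 := by
      exact (Matrix.mem_unitaryGroup_iff'.mp (hherm.eigenvectorUnitary).2)
    rw [this, Matrix.one_mul, Matrix.trace_diagonal]
    simp [hμ]
  have hdet' : ∏ i, μ i = 1 := by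
    have := hherm.det_eq_prod_eigenvalues
    rw [hdet] at this
    simpa using this.symm
  classical
  set S := Finset.univ.filter (fun i => μ i = -1) with hS
  have hsum : ∑ i, μ i = (n : ℝ) - 2 * S.card := by
    rw [← Finset.sum_filter_add_sum_filter_not Finset.univ (fun i => μ i = -1)]
    have h1 : ∑ i ∈ S, μ i = - S.card := by
      rw [Finset.sum_congr rfl (fun i hi => (Finset.mem_filter.mp hi).2)]
      simp [hS]
    have h2 : ∑ i ∈ Finset.univ.filter (fun i => ¬ μ i = -1), μ i
        = (Finset.univ.filter (fun i => ¬ μ i = -1)).card := by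
      rw [Finset.sum_congr rfl (fun i hi => ((heig i).resolve_right (Finset.mem_filter.mp hi).2))]
      simp
    rw [h1, h2]
    have hcards : S.card + (Finset.univ.filter (fun i => ¬ μ i = -1)).card = n := by
      rw [Finset.card_filter_add_card_filter_not]
      simp
    have : ((Finset.univ.filter (fun i => ¬ μ i = -1)).card : ℝ) = (n : ℝ) - S.card := by
      have := congrArg (fun x : ℕ => (x : ℝ)) hcards
      push_cast at this ⊢
      linarith
    rw [this]
    ring
  have hcard1 : (S.card : ℝ) = 1 := by
    rw [htr] at htr'
    rw [hsum] at htr'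
    linarith
  have hcard1' : S.card = 1 := by exact_mod_cast hcard1
  have hprod : ∏ i, μ i = (-1) ^ S.card := by
    rw [← Finset.prod_filter_mul_prod_filter_not Finset.univ (fun i => μ i = -1)]
    have h1 : ∏ i ∈ S, μ i = (-1 : ℝ) ^ S.card := by
      rw [Finset.prod_congr rfl (fun i hi => (Finset.mem_filter.mp hi).2)]
      simp [hS]
    have h2 : ∏ i ∈ Finset.univ.filter (fun i => ¬ μ i = -1), μ i = 1 := by
      rw [Finset.prod_congr rfl (fun i hi => ((heig i).resolve_right (Finset.mem_filter.mp hi).2))]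
      simp
    rw [h1, h2, mul_one]
  rw [hdet', hcard1'] at hprod
  norm_num at hprod


section Upper

variable {n : ℕ} {f : (Fin h → ZMod 2) → Matrix (Fin n) (Fin n) ℝ}
  (hadd : ∀ v w, f (v + w) = f v * f w) (hf0 : f 0 = 1)

section basic
variable (f)

/-- unnormalized projection -/
noncomputable def Smat (w : Fin h → ZMod 2) : Matrix (Fin n) (Fin n) ℝ :=
  ∑ v, sgn (ip v w) • f v

/-- projection onto χ_w isotypic component -/
noncomputable def Emat (w : Fin h → ZMod 2) : Matrix (Fin n) (Fin n) ℝ :=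
  ((2:ℝ) ^ h)⁻¹ • Smat f w

end basic

include hadd hf0

lemma f_mul_self (v : Fin h → ZMod 2) : f v * f v = 1 := by
  rw [← hadd, pi_add_self, hf0]

lemma Smat_mul_Smat (w : Fin h → ZMod 2) :
    Smat f w * Smat f w = (2:ℝ) ^ h • Smat f w := by
  unfold Smat
  rw [Finset.sum_mul_sum]
  have step : ∀ v : Fin h → ZMod 2,
      ∑ v' : Fin h → ZMod 2, (sgn (ip v w) • f v) * (sgn (ip v' w) • f v')
        = ∑ u : Fin h → ZMod 2, sgn (ip u w) • f u := by
    intro v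
    rw [← Equiv.sum_comp (Equiv.addLeft v) (fun v' => (sgn (ip v w) • f v) * (sgn (ip v' w) • f v'))]
    refine Finset.sum_congr rfl fun u _ => ?_
    simp only [Equiv.coe_addLeft]
    rw [smul_mul_smul_comm, ← hadd, ← add_assoc, pi_add_self, zero_add,
      ip_add_left, sgn_add, ← mul_assoc, sgn_mul_self, one_mul]
  rw [Finset.sum_congr rfl fun v _ => step v, Finset.sum_const, Finset.card_univ,
    ← Nat.cast_smul_eq_nsmul ℝ]
  norm_num [Fintype.card_fun]

lemma Emat_idem (w : Fin h → ZMod 2) : Emat f w * Emat f w = Emat f w := by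
  unfold Emat
  rw [smul_mul_assoc, mul_smul_comm, Smat_mul_Smat hadd hf0, smul_smul, smul_smul]
  congr 1
  have : ((2:ℝ)^h) ≠ 0 := by positivity
  field_simp

omit hadd in
lemma sum_Emat : ∑ w : Fin h → ZMod 2, Emat f w = 1 := by
  unfold Emat Smat
  rw [← Finset.smul_sum, Finset.sum_comm]
  have : ∀ v : Fin h → ZMod 2, ∑ w : Fin h → ZMod 2, sgn (ip v w) • f v
      = (if v = 0 then (2:ℝ)^h else 0) • f v := by
    intro v
    rw [← Finset.sum_smul]
    congr 1
    rw [Finset.sum_congr rfl fun w _ => by rw [ip_comm]]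
    exact sum_sgn_ip v
  rw [Finset.sum_congr rfl fun v _ => this v]
  simp only [ite_smul, zero_smul]
  rw [Finset.sum_ite_eq' Finset.univ 0 (fun v => ((2:ℝ)^h) • f v)]
  have h2 : ((2:ℝ)^h) ≠ 0 := by positivity
  simp [hf0, smul_smul, inv_mul_cancel₀ h2]

lemma fourier_inv (v : Fin h → ZMod 2) :
    f v = ∑ w : Fin h → ZMod 2, sgn (ip v w) • Emat f w := by
  unfold Emat Smat
  have : ∀ w : Fin h → ZMod 2, sgn (ip v w) • (((2:ℝ)^h)⁻¹ • ∑ u, sgn (ip u w) • f u)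
      = ((2:ℝ)^h)⁻¹ • ∑ u, sgn (ip (v + u) w) • f u := by
    intro w
    rw [smul_comm]
    congr 1
    rw [Finset.smul_sum]
    refine Finset.sum_congr rfl fun u _ => ?_
    rw [ip_add_left, sgn_add, smul_smul]
  rw [Finset.sum_congr rfl fun w _ => this w, ← Finset.smul_sum, Finset.sum_comm]
  have h2 : ∀ u : Fin h → ZMod 2, ∑ w : Fin h → ZMod 2, sgn (ip (v+u) w) • f u
      = (if u = v then (2:ℝ)^h else 0) • f u := by
    intro u
    rw [← Finset.sum_smul]
    congr 1
    rw [Finset.sum_congr rfl fun w _ => by rw [ip_comm]]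
    rw [sum_sgn_ip (v+u)]
    congr 1
    simp only [eq_iff_iff]
    constructor
    · intro hvu
      have h3 := congrArg (fun x => v + x) hvu
      simpa [← add_assoc, pi_add_self] using h3
    · rintro rfl; exact pi_add_self _
  rw [Finset.sum_congr rfl fun u _ => h2 u]
  simp only [ite_smul, zero_smul]
  rw [Finset.sum_ite_eq' Finset.univ v (fun u => ((2:ℝ)^h) • f u)]
  have h2' : ((2:ℝ)^h) ≠ 0 := by positivity
  simp [smul_smul, inv_mul_cancel₀ h2']


section sym
variable (horth : ∀ v, (f v)ᵀ * f v = 1)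
include horth

lemma f_transpose (v : Fin h → ZMod 2) : (f v)ᵀ = f v := by
  have h1 := f_mul_self hadd hf0 v
  calc (f v)ᵀ = (f v)ᵀ * (f v * f v) := by rw [h1, Matrix.mul_one]
  _ = ((f v)ᵀ * f v) * f v := by rw [Matrix.mul_assoc]
  _ = f v := by rw [horth, Matrix.one_mul]

lemma Emat_transpose (w : Fin h → ZMod 2) : (Emat f w)ᵀ = Emat f w := by
  unfold Emat Smat
  rw [Matrix.transpose_smul, Matrix.transpose_sum]
  congr 1
  refine Finset.sum_congr rfl fun v _ => ?_
  rw [Matrix.transpose_smul, f_transpose hadd hf0 horth]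

lemma trace_Emat_eq (w : Fin h → ZMod 2) :
    (Emat f w).trace = ∑ i, ∑ j, (Emat f w i j)^2 := by
  have hidem : Emat f w * Emat f w = Emat f w := Emat_idem hadd hf0 w
  have hsymE : ∀ i j, Emat f w j i = Emat f w i j := by
    intro i j
    have := congrFun (congrFun (Emat_transpose hadd hf0 horth w) i) j
    simpa [Matrix.transpose_apply] using this
  conv_lhs => rw [← hidem]
  rw [Matrix.trace]
  refine Finset.sum_congr rfl fun i _ => ?_
  rw [Matrix.diag_apply, Matrix.mul_apply]
  refine Finset.sum_congr rfl fun j _ => ?_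
  rw [hsymE i j, sq]

lemma trace_Emat_nonneg (w : Fin h → ZMod 2) : 0 ≤ (Emat f w).trace := by
  rw [trace_Emat_eq hadd hf0 horth w]
  positivity

lemma trace_Emat_ge_one (w : Fin h → ZMod 2) (hne : Emat f w ≠ 0) :
    1 ≤ (Emat f w).trace := by
  set E := Emat f w with hE
  have hidem : E * E = E := Emat_idem hadd hf0 w
  obtain ⟨a, b, hab⟩ : ∃ a b, E a b ≠ 0 := by
    by_contra hc; push_neg at hc
    exact hne (by ext i j; exact hc i j)
  set u : Fin n → ℝ := fun i => E i b with hu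
  have hfix : ∀ i, ∑ j, E i j * u j = u i := by
    intro i
    have := congrFun (congrFun hidem i) b
    rw [Matrix.mul_apply] at this
    exact this
  set U : ℝ := ∑ j, u j ^ 2 with hU
  have hUpos : 0 < U := by
    have h1 : (u a)^2 ≤ U := by
      rw [hU]
      exact Finset.single_le_sum (f := fun j => u j ^ 2) (fun j _ => sq_nonneg _) (Finset.mem_univ a)
    have h2 : 0 < (u a)^2 := by positivity
    linarith
  have hCS : ∀ i, (u i)^2 ≤ (∑ j, (E i j)^2) * U := by
    intro i
    rw [← hfix i, hU]
    exact Finset.sum_mul_sq_le_sq_mul_sq Finset.univ _ _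
  have hsum : U ≤ (∑ i, ∑ j, (E i j)^2) * U := by
    rw [Finset.sum_mul]
    calc U = ∑ i, (u i)^2 := rfl
    _ ≤ ∑ i, (∑ j, (E i j)^2) * U := Finset.sum_le_sum fun i _ => hCS i
  rw [trace_Emat_eq hadd hf0 horth w]
  nlinarith

end sym

lemma trace_f_eq (v : Fin h → ZMod 2) :
    (f v).trace = ∑ w : Fin h → ZMod 2, sgn (ip v w) * (Emat f w).trace := by
  conv_lhs => rw [fourier_inv hadd hf0 v]
  rw [Matrix.trace_sum]
  refine Finset.sum_congr rfl fun w _ => ?_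
  rw [Matrix.trace_smul]
  rfl

omit hadd in
lemma sum_trace_Emat : ∑ w : Fin h → ZMod 2, (Emat f w).trace = n := by
  rw [← Matrix.trace_sum, sum_Emat hf0]
  simp [Matrix.trace_one]

/-- Main abstract bound: a faithful family gives h ≤ n - 1. -/
theorem rank_le (horth : ∀ v, (f v)ᵀ * f v = 1) (hdet : ∀ v, (f v).det = 1)
    (hinj : ∀ v, f v = 1 → v = 0) : h ≤ n - 1 := by
  classical
  set K : Finset (Fin h → ZMod 2) := Finset.univ.filter (fun w => Emat f w ≠ 0) with hK
  -- trace vanishes off K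
  have htr0 : ∀ w ∉ K, (Emat f w).trace = 0 := by
    intro w hw
    have : Emat f w = 0 := by
      by_contra hc
      exact hw (Finset.mem_filter.mpr ⟨Finset.mem_univ w, hc⟩)
    rw [this, Matrix.trace_zero]
  have hsumK : ∑ w ∈ K, (Emat f w).trace = n := by
    rw [← sum_trace_Emat (f := f) hf0]
    exact Finset.sum_subset (Finset.subset_univ K) (fun w _ hw => htr0 w hw)
  have hge1 : ∀ w ∈ K, 1 ≤ (Emat f w).trace := fun w hw =>
    trace_Emat_ge_one hadd hf0 horth w (Finset.mem_filter.mp hw).2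
  have hKn : (K.card : ℝ) ≤ n := by
    calc (K.card : ℝ) = ∑ _w ∈ K, (1:ℝ) := by simp
    _ ≤ ∑ w ∈ K, (Emat f w).trace := Finset.sum_le_sum hge1
    _ = n := hsumK
  have hKn' : K.card ≤ n := by exact_mod_cast hKn
  -- orthogonality to all of K forces zero
  have horthvan : ∀ v : Fin h → ZMod 2, (∀ w ∈ K, ip v w = 0) → v = 0 := by
    intro v hv
    apply hinj
    rw [fourier_inv hadd hf0 v, ← sum_Emat (f := f) hf0]
    refine Finset.sum_congr rfl fun w _ => ?_
    by_cases hw : w ∈ K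
    · rw [(sgn_eq_one_iff _).mpr (hv w hw), one_smul]
    · have : Emat f w = 0 := by
        by_contra hc
        exact hw (Finset.mem_filter.mpr ⟨Finset.mem_univ w, hc⟩)
      rw [this, smul_zero]
  -- injectivity of the character map
  set Φ : (Fin h → ZMod 2) → (K → ZMod 2) := fun v => fun w => ip v (w : Fin h → ZMod 2) with hΦ
  have hΦinj : Function.Injective Φ := by
    intro v v' hvv
    have : v + v' = 0 := by
      apply horthvan
      intro w hw
      have h1 : ip v w = ip v' w := congrFun hvv ⟨w, hw⟩
      rw [ip_add_left, h1, CharTwo.add_self_eq_zero]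
    have := congrArg (fun x => x + v') this
    simpa [add_assoc, pi_add_self] using this
  have hcard : 2 ^ h ≤ 2 ^ K.card := by
    have := Fintype.card_le_of_injective Φ hΦinj
    simpa [Fintype.card_fun] using this
  have hhK : h ≤ K.card := by
    exact (Nat.pow_le_pow_iff_right (by norm_num)).mp hcard
  by_contra hcon
  push_neg at hcon
  have hn1 : n - 1 < h := hcon
  have hn : 1 ≤ n := by omega
  have hhn : h = n := by omega
  have hKcard : K.card = n := by omega
  -- all traces equal 1 on K
  have htr1 : ∀ w ∈ K, (Emat f w).trace = 1 := by
    intro w hw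
    by_contra hne
    have hgt : 1 < (Emat f w).trace := lt_of_le_of_ne (hge1 w hw) (Ne.symm hne)
    have : (K.card : ℝ) < ∑ w ∈ K, (Emat f w).trace := by
      calc (K.card : ℝ) = ∑ _w ∈ K, (1:ℝ) := by simp
      _ < ∑ w ∈ K, (Emat f w).trace := by
        apply Finset.sum_lt_sum (fun x hx => hge1 x hx) ⟨w, hw, hgt⟩
    rw [hsumK, hKcard] at this
    exact lt_irrefl _ this
  -- Φ is surjective
  have hΦsurj : Function.Surjective Φ := by
    have hbij : Function.Bijective Φ := (Fintype.bijective_iff_injective_and_card Φ).mpr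
      ⟨hΦinj, by simp [Fintype.card_fun, hKcard, hhn]⟩
    exact hbij.2
  -- K is nonempty
  obtain ⟨w0, hw0⟩ : ∃ w0, w0 ∈ K := by
    apply Finset.card_pos.mp
    omega
  obtain ⟨v, hv⟩ := hΦsurj (fun w => if w = ⟨w0, hw0⟩ then 1 else 0)
  -- compute the trace of f v
  have hipv : ∀ w ∈ K, ip v w = if w = w0 then 1 else 0 := by
    intro w hw
    have := congrFun hv ⟨w, hw⟩
    simp only [hΦ] at this
    rw [this]
    by_cases hww : w = w0
    · simp [hww]
    · rw [if_neg (by simpa using hww), if_neg hww]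
  have htrv : (f v).trace = (n : ℝ) - 2 := by
    rw [trace_f_eq hadd hf0 v]
    rw [← Finset.sum_subset (Finset.subset_univ K)
      (fun w _ hw => by rw [htr0 w hw, mul_zero])]
    have : ∀ w ∈ K, sgn (ip v w) * (Emat f w).trace = if w = w0 then -1 else 1 := by
      intro w hw
      rw [htr1 w hw, mul_one, hipv w hw]
      by_cases hww : w = w0
      · simp [hww, sgn_one]
      · simp [hww, sgn_zero]
    rw [Finset.sum_congr rfl this]
    have : ∀ w ∈ K, (if w = w0 then (-1:ℝ) else 1) = 1 + (if w = w0 then -2 else 0) := by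
      intro w hw
      by_cases hww : w = w0 <;> simp [hww] <;> norm_num
    rw [Finset.sum_congr rfl this, Finset.sum_add_distrib, Finset.sum_const,
      Finset.sum_ite_eq' K w0 (fun _ => (-2:ℝ)), if_pos hw0, hKcard]
    simp
    ring
  -- contradiction with the spectral lemma
  exact involution_trace_ne n (f v) (f_transpose hadd hf0 horth v)
    (f_mul_self hadd hf0 v) (hdet v) htrv

end Upper


section Lower

variable {m : ℕ}

lemma sgn_sum (s : Finset (Fin m)) (g : Fin m → ZMod 2) :
    sgn (∑ i ∈ s, g i) = ∏ i ∈ s, sgn (g i) := by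
  classical
  induction s using Finset.induction_on with
  | empty => simp [sgn_zero]
  | insert a s' hx ih =>
                    rw [Finset.sum_insert hx, Finset.prod_insert hx, sgn_add, ih]

/-- extension of a vector on `Fin m` to `Fin (m+1)` with last coordinate the sum -/
def ext (v : Fin m → ZMod 2) : Fin (m + 1) → ZMod 2 :=
  fun i => if h : (i : ℕ) < m then v ⟨i, h⟩ else ∑ j, v j

lemma ext_add (v w : Fin m → ZMod 2) : ext (v + w) = ext v + ext w := by
  funext i
  unfold ext
  by_cases h : (i : ℕ) < m
  · simp [h]
  · simp [h, Finset.sum_add_distrib]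

lemma ext_zero : ext (0 : Fin m → ZMod 2) = 0 := by
  funext i; unfold ext
  by_cases h : (i : ℕ) < m <;> simp [h]

lemma ext_castSucc (v : Fin m → ZMod 2) (i : Fin m) : ext v i.castSucc = v i := by
  unfold ext
  rw [dif_pos (by simpa using i.isLt)]
  exact congrArg v (Fin.ext (by simp))

lemma ext_last (v : Fin m → ZMod 2) : ext v (Fin.last m) = ∑ j, v j := by
  unfold ext
  rw [dif_neg (by simp)]

/-- the diagonal sign matrix -/
noncomputable def Dmat (v : Fin m → ZMod 2) : Matrix (Fin (m+1)) (Fin (m+1)) ℝ :=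
  Matrix.diagonal (fun i => sgn (ext v i))

lemma Dmat_mul (v w : Fin m → ZMod 2) : Dmat (v + w) = Dmat v * Dmat w := by
  unfold Dmat
  rw [Matrix.diagonal_mul_diagonal]
  exact congrArg Matrix.diagonal (funext fun i => by rw [ext_add, Pi.add_apply]; exact sgn_add _ _)

lemma Dmat_zero : Dmat (0 : Fin m → ZMod 2) = 1 := by
  unfold Dmat
  rw [ext_zero]
  simp [sgn_zero]

lemma Dmat_mem (v : Fin m → ZMod 2) : Dmat v ∈ Matrix.unitaryGroup (Fin (m+1)) ℝ := by
  rw [Matrix.mem_unitaryGroup_iff']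
  rw [Matrix.star_eq_conjTranspose]
  unfold Dmat
  rw [Matrix.diagonal_conjTranspose]
  rw [Matrix.diagonal_mul_diagonal]
  have : ∀ i, star (sgn (ext v i)) * sgn (ext v i) = 1 := by
    intro i
    simp [sgn_mul_self]
  simp only [Pi.star_apply, Pi.mul_apply]
  rw [show (fun i => star (sgn (ext v i)) * sgn (ext v i)) = fun _ => 1 from funext this]
  exact Matrix.diagonal_one

lemma Dmat_det (v : Fin m → ZMod 2) : (Dmat v).det = 1 := by
  unfold Dmat
  rw [Matrix.det_diagonal, ← sgn_sum Finset.univ (fun i => ext v i)]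
  · have : ∑ i, ext v i = 0 := by
      rw [Fin.sum_univ_castSucc]
      rw [ext_last, Finset.sum_congr rfl fun i _ => ext_castSucc v i]
      exact CharTwo.add_self_eq_zero _
    rw [this, sgn_zero]

lemma Dmat_inj (v : Fin m → ZMod 2) (hv : Dmat v = 1) : v = 0 := by
  funext i
  have := congrFun (congrFun hv i.castSucc) i.castSucc
  rw [Dmat, Matrix.diagonal_apply_eq, Matrix.one_apply_eq, ext_castSucc] at this
  exact (sgn_eq_one_iff _).mp this

/-- the homomorphism into SO(m+1) -/
noncomputable def φSO : (Fin m → Multiplicative (ZMod 2)) →* ↥(SO (m+1)) where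
  toFun := fun x => ⟨⟨Dmat (fun i => (x i).toAdd), Dmat_mem _⟩, Dmat_det _⟩
  map_one' := Subtype.ext (Subtype.ext Dmat_zero)
  map_mul' := fun x y => Subtype.ext (Subtype.ext (Dmat_mul _ _))

lemma φSO_inj : Function.Injective (φSO (m := m)) := by
  rw [injective_iff_map_eq_one]
  intro x hx
  have h1 : Dmat (fun i => (x i).toAdd) = 1 := by
    have := congrArg (fun a : ↥(SO (m+1)) => ((a : Matrix.orthogonalGroup (Fin (m+1)) ℝ) :
      Matrix (Fin (m+1)) (Fin (m+1)) ℝ)) hx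
    simpa [φSO] using this
  have h2 := Dmat_inj _ h1
  funext i
  have := congrFun h2 i
  simpa using this

end Lower

end TwoRankSO

namespace TwoRankSO

lemma upper (n k : ℕ) (H : Subgroup ↥(SO n)) (e : ↥H ≃* (Fin k → Multiplicative (ZMod 2))) :
    k ≤ n - 1 := by
  set f : (Fin k → ZMod 2) → Matrix (Fin n) (Fin n) ℝ :=
    fun v => (((((e.symm (fun i => Multiplicative.ofAdd (v i))) : ↥H) : ↥(SO n)) :
      Matrix.orthogonalGroup (Fin n) ℝ) : Matrix (Fin n) (Fin n) ℝ) with hf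
  have hadd : ∀ v w, f (v + w) = f v * f w := by
    intro v w
    have hx : (fun i => Multiplicative.ofAdd ((v + w) i))
        = (fun i => Multiplicative.ofAdd (v i)) * (fun i => Multiplicative.ofAdd (w i)) := rfl
    have h5 := _root_.map_mul e.symm (fun i => Multiplicative.ofAdd (v i))
      (fun i => Multiplicative.ofAdd (w i))
    simp only [hf, hx, h5]
    rfl
  have hf0 : f 0 = 1 := by
    have hx : (fun i => Multiplicative.ofAdd ((0 : Fin k → ZMod 2) i))
        = (1 : Fin k → Multiplicative (ZMod 2)) := rfl
    have h5 := _root_.map_one e.symm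
    simp only [hf, hx, h5]
    rfl
  have horth : ∀ v, (f v)ᵀ * f v = 1 := by
    intro v
    have hmem := ((((e.symm (fun i => Multiplicative.ofAdd (v i))) : ↥H) : ↥(SO n)) :
      Matrix.orthogonalGroup (Fin n) ℝ).2
    rw [← conjT_eq_T, ← Matrix.star_eq_conjTranspose]
    exact Matrix.mem_unitaryGroup_iff'.mp hmem
  have hdet : ∀ v, (f v).det = 1 := by
    intro v
    exact (((e.symm (fun i => Multiplicative.ofAdd (v i))) : ↥H) : ↥(SO n)).2
  have hinj : ∀ v, f v = 1 → v = 0 := by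
    intro v hv
    have h1 : (((e.symm (fun i => Multiplicative.ofAdd (v i))) : ↥H) : ↥(SO n)) = 1 :=
      Subtype.ext (Subtype.ext hv)
    have h2 : (e.symm (fun i => Multiplicative.ofAdd (v i))) = 1 :=
      OneMemClass.coe_eq_one.mp h1
    rw [MulEquiv.symm_apply_eq, _root_.map_one] at h2
    funext i
    exact congrArg Multiplicative.toAdd (congrFun h2 i)
  exact rank_le hadd hf0 horth hdet hinj

end TwoRankSO

/-- The 2-rank of the special orthogonal group `SO(n)` equals `n - 1`. -/
theorem twoRank_SO (n : ℕ) : twoRank (SO n) = n - 1 := by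
  classical
  have hmem : (n - 1) ∈ {h : ℕ | ∃ H : Subgroup ↥(SO n),
      Nonempty (H ≃* (Fin h → Multiplicative (ZMod 2)))} := by
    cases n with
    | zero =>
      have h0 : (0 : ℕ) - 1 = 0 := rfl
      rw [h0]
      exact ⟨⊥, ⟨MulEquiv.ofUnique⟩⟩
    | succ m =>
      exact ⟨(TwoRankSO.φSO (m := m)).range,
        ⟨(MonoidHom.ofInjective TwoRankSO.φSO_inj).symm⟩⟩
  have hub : ∀ k ∈ {h : ℕ | ∃ H : Subgroup ↥(SO n),
      Nonempty (H ≃* (Fin h → Multiplicative (ZMod 2)))}, k ≤ n - 1 := by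
    intro k hk
    obtain ⟨H, ⟨eqv⟩⟩ := hk
    exact TwoRankSO.upper n k H eqv
  rw [twoRank]
  exact le_antisymm (csSup_le ⟨n - 1, hmem⟩ hub) (le_csSup ⟨n - 1, hub⟩ hmem)
end
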